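/- Let A be a unital complex Banach algebra and a, b, c ∈ A satisfy a(ba)² = abaca = acaba = (ac)²a. Then 1 - ba has a generalized Drazin inverse if and only if 1 - ac has a generalized Drazin inverse. -/

import Mathlib

def IsQuasinilpotent {A : Type*} [Ring A] (q : A) : Prop :=
  ∀ y : A, q * y = y * q → IsUnit (1 + q * y)

def IsGDrazinInverse {A : Type*} [Ring A] (a x : A) : Prop :=
  x = x * a * x ∧ a * x = x * a ∧ IsQuasinilpotent (a - a * a * x)

open scoped NNReal ENNReal

section GJ

variable {A : Type*} [NormedRing A] [NormedAlgebra ℂ A] [CompleteSpace A]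

lemma IsQuasinilpotent.spectrum_subset {q : A} (hq : IsQuasinilpotent q) :
    ∀ z : ℂ, z ∈ spectrum ℂ q → z = 0 := by
  intro z hz
  by_contra hz0
  have hcomm : q * (algebraMap ℂ A (-z⁻¹)) = (algebraMap ℂ A (-z⁻¹)) * q :=
    (Algebra.commutes _ _).symm
  have hu := hq _ hcomm
  have key : algebraMap ℂ A z - q = algebraMap ℂ A z * (1 + q * algebraMap ℂ A (-z⁻¹)) := by
    have h1 : (algebraMap ℂ A z) * (q * algebraMap ℂ A (-z⁻¹))
        = q * ((algebraMap ℂ A z) * algebraMap ℂ A (-z⁻¹)) := by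
      rw [← mul_assoc, Algebra.commutes z q, mul_assoc]
    rw [mul_add, mul_one, h1, ← map_mul]
    have hzz : z * (-z⁻¹) = -1 := by field_simp
    rw [hzz, map_neg, map_one, mul_neg_one, sub_eq_add_neg]
  have : IsUnit (algebraMap ℂ A z - q) := by
    rw [key]
    exact ((Ne.isUnit hz0).map (algebraMap ℂ A)).mul hu
  exact (spectrum.mem_iff.mp hz) this

lemma IsQuasinilpotent.spectralRadius_eq_zero {q : A} (hq : IsQuasinilpotent q) :
    spectralRadius ℂ q = 0 := by
  refine le_antisymm ?_ zero_le
  simp only [spectralRadius]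
  refine iSup₂_le fun k hk => ?_
  rw [hq.spectrum_subset k hk]
  simp

lemma isQuasinilpotent_of_pow_le (q Q : A) (hq : IsQuasinilpotent q) (C : ℝ)
    (hQn : ∀ n : ℕ, 0 < n → ‖Q ^ n‖ ≤ C * ‖q ^ n‖) : IsQuasinilpotent Q := by
  intro y hy
  set C₁ : ℝ := max C 0 + 1 with hC₁
  have hC₁pos : 0 < C₁ := by positivity
  have hQn' : ∀ n : ℕ, 0 < n → ‖Q ^ n‖ ≤ C₁ * ‖q ^ n‖ := by
    intro n hn
    refine (hQn n hn).trans (mul_le_mul_of_nonneg_right ?_ (norm_nonneg _))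
    rw [hC₁]
    nlinarith [le_max_left C (0:ℝ)]
  set δ : ℝ≥0 := (2 * (‖y‖₊ + 1))⁻¹ with hδ
  have hδpos : 0 < δ := by
    rw [hδ]
    have h2 : (0:ℝ≥0) < 2 * (‖y‖₊ + 1) := by positivity
    exact inv_pos.mpr h2
  have hδY : (δ : ℝ) * ‖y‖ ≤ 1 / 2 := by
    have h1 : (δ : ℝ) = (2 * (‖y‖ + 1))⁻¹ := by
      rw [hδ]
      push_cast
      norm_num
    rw [h1]
    rw [inv_mul_le_iff₀ (by positivity)]
    nlinarith [norm_nonneg y]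
  -- Gelfand
  have hgel := spectrum.pow_nnnorm_pow_one_div_tendsto_nhds_spectralRadius q
  rw [hq.spectralRadius_eq_zero] at hgel
  have hev1 : ∀ᶠ n : ℕ in Filter.atTop, (‖q ^ n‖₊ : ENNReal) ^ (1/(n:ℝ)) < (δ : ENNReal) :=
    hgel.eventually_lt_const (by exact_mod_cast hδpos)
  have hev2 : ∀ᶠ n : ℕ in Filter.atTop, C₁ * (1/2 : ℝ)^n * ‖(1:A)‖ < 1 := by
    have ht : Filter.Tendsto (fun n : ℕ => C₁ * (1/2 : ℝ)^n * ‖(1:A)‖) Filter.atTop (nhds 0) := by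
      have := tendsto_pow_atTop_nhds_zero_of_lt_one (by norm_num : (0:ℝ) ≤ 1/2) (by norm_num)
      simpa using (this.const_mul C₁).mul_const ‖(1:A)‖
    exact ht.eventually_lt_const one_pos
  have hev3 : ∀ᶠ n : ℕ in Filter.atTop, 1 ≤ n := Filter.eventually_ge_atTop 1
  obtain ⟨n, hgb, hsm, hn1⟩ := (hev1.and (hev2.and hev3)).exists
  have hnne : (n : ℝ) ≠ 0 := by positivity
  -- ‖q^n‖ ≤ δ^n in ℝ
  have hqn : ‖q ^ n‖ ≤ (δ : ℝ)^n := by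
    have ekey : ((‖q ^ n‖₊ : ENNReal) ^ (1/(n:ℝ))) ^ ((n:ℕ):ℝ) = (‖q ^ n‖₊ : ENNReal) := by
      rw [← ENNReal.rpow_mul, one_div, inv_mul_cancel₀ hnne, ENNReal.rpow_one]
    have e1 : (‖q ^ n‖₊ : ENNReal) ≤ (δ : ENNReal) ^ (n : ℕ) := by
      calc (‖q ^ n‖₊ : ENNReal) = ((‖q ^ n‖₊ : ENNReal) ^ (1/(n:ℝ))) ^ ((n:ℕ):ℝ) := ekey.symm
        _ ≤ ((δ : ENNReal)) ^ ((n:ℕ):ℝ) := ENNReal.rpow_le_rpow hgb.le (by positivity)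
        _ = (δ : ENNReal) ^ (n:ℕ) := by rw [ENNReal.rpow_natCast]
    have e2 : (‖q ^ n‖₊ : ENNReal) ≤ ((δ^n : ℝ≥0) : ENNReal) := by
      rw [← ENNReal.coe_pow] at e1
      exact e1
    have e3 : ‖q ^ n‖₊ ≤ δ^n := by exact_mod_cast e2
    calc ‖q ^ n‖ = ((‖q ^ n‖₊ : ℝ≥0) : ℝ) := rfl
      _ ≤ ((δ^n : ℝ≥0) : ℝ) := by exact_mod_cast e3
      _ = (δ:ℝ)^n := by push_cast; ring
  -- bound ‖(Q*y)^n‖ * ‖1‖ < 1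
  have hbound : ‖(Q * y) ^ n‖ * ‖(1:A)‖ < 1 := by
    have hcm : (Q * y) ^ n = Q ^ n * y ^ n := (Commute.mul_pow hy n)
    have h2 : ‖(Q * y) ^ n‖ ≤ C₁ * ((δ:ℝ) * ‖y‖)^n := by
      rw [hcm, mul_pow]
      calc ‖Q ^ n * y ^ n‖ ≤ ‖Q ^ n‖ * ‖y ^ n‖ := norm_mul_le _ _
        _ ≤ (C₁ * ‖q ^ n‖) * ‖y‖^n := by
            apply mul_le_mul (hQn' n (by omega)) (norm_pow_le' _ (by omega)) (norm_nonneg _)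
            positivity
        _ ≤ (C₁ * (δ:ℝ)^n) * ‖y‖^n := by
            have := hqn
            gcongr
        _ = C₁ * ((δ:ℝ)^n * ‖y‖^n) := by ring
    have h3 : ((δ:ℝ) * ‖y‖)^n ≤ (1/2:ℝ)^n := by
      apply pow_le_pow_left₀ (by positivity) hδY
    calc ‖(Q * y) ^ n‖ * ‖(1:A)‖ ≤ (C₁ * (1/2:ℝ)^n) * ‖(1:A)‖ := by
          apply mul_le_mul_of_nonneg_right _ (norm_nonneg _)
          exact h2.trans (by nlinarith)
      _ < 1 := by simpa [mul_assoc] using hsm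
  -- spectral radius < 1
  obtain ⟨m, rfl⟩ : ∃ m, n = m + 1 := ⟨n - 1, by omega⟩
  have hrle := spectrum.spectralRadius_le_pow_nnnorm_pow_one_div ℂ (Q * y) m
  have hrlt : spectralRadius ℂ (Q * y) < 1 := by
    refine hrle.trans_lt ?_
    rw [← ENNReal.mul_rpow_of_nonneg _ _ (by positivity : (0:ℝ) ≤ 1/((m:ℝ)+1))]
    apply ENNReal.rpow_lt_one
    · rw [← ENNReal.coe_mul]
      rw [← ENNReal.coe_one, ENNReal.coe_lt_coe]
      have : (‖(Q*y)^(m+1)‖₊ * ‖(1:A)‖₊ : ℝ≥0) = ‖(Q*y)^(m+1)‖.toNNReal * ‖(1:A)‖.toNNReal := by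
        simp [norm_toNNReal]
      rw [← NNReal.coe_lt_coe]
      push_cast
      calc (‖(Q*y)^(m+1)‖₊ : ℝ) * (‖(1:A)‖₊ : ℝ) = ‖(Q*y)^(m+1)‖ * ‖(1:A)‖ := by rfl
        _ < 1 := by exact_mod_cast hbound
    · positivity
  -- conclude
  have hmem : (-1 : ℂ) ∉ spectrum ℂ (Q * y) := by
    intro hm
    have h1 : ((‖(-1 : ℂ)‖₊ : ℝ≥0∞)) ≤ spectralRadius ℂ (Q * y) := by
      simp only [spectralRadius]
      exact le_iSup₂ (f := fun k (_ : k ∈ spectrum ℂ (Q * y)) => (‖k‖₊ : ℝ≥0∞)) (-1 : ℂ) hm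
    rw [show ‖(-1:ℂ)‖₊ = 1 by simp] at h1
    simp only [ENNReal.coe_one] at h1
    exact absurd (h1.trans_lt hrlt) (lt_irrefl _)
  have hun := spectrum.notMem_iff.mp hmem
  have : algebraMap ℂ A (-1) - Q * y = -(1 + Q * y) := by
    rw [map_neg, map_one]; noncomm_ring
  rw [this] at hun
  simpa using hun.neg



lemma gd_transfer (a b c x : A)
    (h1 : a * b * a * b * a = a * b * a * c * a)
    (h2 : a * b * a * c * a = a * c * a * b * a)
    (h3 : a * c * a * b * a = a * c * a * c * a)
    (hx : IsGDrazinInverse (1 - a * c) x) :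
    ∃ y : A, IsGDrazinInverse (1 - b * a) y := by
  obtain ⟨hx1, hx2, hx3⟩ := hx
  -- opaque abbreviations
  obtain ⟨β, hβ⟩ : ∃ β : A, β = 1 - a * c := ⟨_, rfl⟩
  obtain ⟨p, hp⟩ : ∃ p : A, p = 1 - β * x := ⟨_, rfl⟩
  obtain ⟨q, hq⟩ : ∃ q : A, q = β * p := ⟨_, rfl⟩
  obtain ⟨d, hd⟩ : ∃ d : A, d = a * b - a * c := ⟨_, rfl⟩
  obtain ⟨E, hE⟩ : ∃ E : A, E = d * a := ⟨_, rfl⟩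
  -- basic commutation facts from gD axioms
  have hx2' : β * x = x * β := by rw [hβ]; exact hx2
  have hx1' : x * β * x = x := by rw [hβ]; exact hx1.symm
  have hxβx : x * (β * x) = x := by rw [← mul_assoc]; exact hx1'
  have hβac : a * c = 1 - β := by rw [hβ]; noncomm_ring
  -- q is quasinilpotent
  have hqQN : IsQuasinilpotent q := by
    have e : (1 - a * c) - (1 - a * c) * (1 - a * c) * x = q := by
      rw [hq, hp, hβ]; noncomm_ring
    rwa [e] at hx3
  -- unit 1 - q
  have hu1 : IsUnit (1 - q) := by
    have h := hqQN (-1) (by noncomm_ring)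
    have e : 1 + q * (-1) = 1 - q := by noncomm_ring
    rwa [e] at h
  obtain ⟨u, hu⟩ := hu1
  have hv1 : (1 - q) * ↑u⁻¹ = 1 := by rw [← hu]; exact u.mul_inv
  have hv2 : (↑u⁻¹ : A) * (1 - q) = 1 := by rw [← hu]; exact u.inv_mul
  obtain ⟨v, hvdef⟩ : ∃ v : A, v = (↑u⁻¹ : A) := ⟨_, rfl⟩
  rw [← hvdef] at hv1 hv2
  obtain ⟨s, hs⟩ : ∃ s : A, s = v * p := ⟨_, rfl⟩
  -- word identities from h1 h2 h3
  have W1 : a * b * E = 0 := by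
    rw [hE, hd]
    have e : a * b * ((a * b - a * c) * a) = a * b * a * b * a - a * b * a * c * a := by
      noncomm_ring
    rw [e, h1, sub_self]
  have W2 : a * c * E = 0 := by
    rw [hE, hd]
    have e : a * c * ((a * b - a * c) * a) = a * c * a * b * a - a * c * a * c * a := by
      noncomm_ring
    rw [e, h3, sub_self]
  have h23 : a * b * a * c * a = a * c * a * c * a := h2.trans h3
  have W3 : E * (c * a) = 0 := by
    rw [hE, hd]
    have e : (a * b - a * c) * a * (c * a) = a * b * a * c * a - a * c * a * c * a := by
      noncomm_ring
    rw [e, h23, sub_self]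
  have W4 : d * (a * c * a) = 0 := by
    rw [hd]
    have e : (a * b - a * c) * (a * c * a) = a * b * a * c * a - a * c * a * c * a := by
      noncomm_ring
    rw [e, h23, sub_self]
  -- p-algebra
  have hβxp : β * x = 1 - p := by rw [hp]; noncomm_ring
  have hpx : p * x = 0 := by
    rw [hp, sub_mul, one_mul]
    have e : β * x * x = x := by rw [hx2', hx1']
    rw [e, sub_self]
  have hxp : x * p = 0 := by
    rw [hp, mul_sub, mul_one, hxβx, sub_self]
  have hbxbx : (β * x) * (β * x) = β * x := by rw [mul_assoc β x, hxβx]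
  have hpp : p * p = p := by
    have e : p * p = 1 - β * x - β * x + (β * x) * (β * x) := by rw [hp]; noncomm_ring
    rw [e, hbxbx, hp]; noncomm_ring
  have hpβ : p * β = β * p := by
    have e1 : β * x * β = β * (β * x) := by rw [mul_assoc, ← hx2']
    have e2 : p * β = β - β * x * β := by rw [hp]; noncomm_ring
    rw [e2, e1, hp]; noncomm_ring
  have hqp : q * p = q := by rw [hq, mul_assoc, hpp]
  have hpq : p * q = q := by
    calc p * q = p * β * p := by rw [hq, mul_assoc]
      _ = β * p * p := by rw [hpβ]
      _ = β * p := by rw [mul_assoc, hpp]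
      _ = q := hq.symm
  have hqβ : q * β = β * q := by
    calc q * β = β * (p * β) := by rw [hq, mul_assoc]
      _ = β * (β * p) := by rw [hpβ]
      _ = β * q := by rw [hq]
  have hqx : q * x = 0 := by rw [hq, mul_assoc, hpx, mul_zero]
  have hxq : x * q = 0 := by
    calc x * q = x * β * p := by rw [hq, mul_assoc]
      _ = β * x * p := by rw [hx2']
      _ = β * (x * p) := by rw [mul_assoc]
      _ = 0 := by rw [hxp, mul_zero]
  -- v commutes
  have comm_v : ∀ t : A, q * t = t * q → v * t = t * v := by
    intro t ht
    have ht' : t * (1 - q) = (1 - q) * t := by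
      rw [mul_sub, sub_mul, mul_one, one_mul, ht]
    calc v * t = (v * t) * ((1 - q) * v) := by rw [hv1, mul_one]
      _ = v * ((t * (1 - q)) * v) := by noncomm_ring
      _ = v * (((1 - q) * t) * v) := by rw [ht']
      _ = (v * (1 - q)) * (t * v) := by noncomm_ring
      _ = t * v := by rw [hv2, one_mul]
  have hvp : v * p = p * v := comm_v p (hqp.trans hpq.symm)
  have hvβ : v * β = β * v := comm_v β hqβ
  -- s-algebra
  have hspv : s = p * v := by rw [hs, hvp]
  have hps : p * s = s := by rw [hs, ← mul_assoc, ← hvp, mul_assoc, hpp, ← hs]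
  have hsp : s * p = s := by rw [hs, mul_assoc, hpp]
  have hvsplit : v = 1 + v * q := by
    have e : v * (1 - q) = v - v * q := by noncomm_ring
    rw [e] at hv2
    calc v = v - v * q + v * q := by noncomm_ring
      _ = 1 + v * q := by rw [hv2]
  have hs_split : s = p + v * q := by
    calc s = v * p := hs
      _ = (1 + v * q) * p := by rw [← hvsplit]
      _ = p + v * (q * p) := by noncomm_ring
      _ = p + v * q := by rw [hqp]
  have hβs : β * s = v * q := by
    calc β * s = β * v * p := by rw [hs, mul_assoc]
      _ = v * β * p := by rw [hvβ]
      _ = v * q := by rw [mul_assoc, ← hq]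
  have hsβ : s * β = v * q := by
    calc s * β = v * (p * β) := by rw [hs, mul_assoc]
      _ = v * (β * p) := by rw [hpβ]
      _ = v * q := by rw [← hq]
  have hacs : (a * c) * s = p := by
    calc (a * c) * s = (1 - β) * s := by rw [hβac]
      _ = s - β * s := by noncomm_ring
      _ = p + v * q - v * q := by rw [hβs, hs_split]
      _ = p := by noncomm_ring
  have hsac : s * (a * c) = p := by
    calc s * (a * c) = s * (1 - β) := by rw [hβac]
      _ = s - s * β := by noncomm_ring
      _ = p + v * q - v * q := by rw [hsβ, hs_split]
      _ = p := by noncomm_ring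
  -- E identities
  have hβE : β * E = E := by
    rw [hβ, sub_mul, one_mul, W2, sub_zero]
  have hpE : p * E = 0 := by
    have h1 : p * E = q * E := by
      calc p * E = p * (β * E) := by rw [hβE]
        _ = (p * β) * E := by rw [mul_assoc]
        _ = (β * p) * E := by rw [hpβ]
        _ = q * E := by rw [hq]
    have h3 : p * E = q * (p * E) := by
      calc p * E = q * E := h1
        _ = (q * p) * E := by rw [hqp]
        _ = q * (p * E) := by rw [mul_assoc]
    have h4 : (1 - q) * (p * E) = 0 := by
      rw [sub_mul, one_mul, ← h3, sub_self]
    calc p * E = (v * (1 - q)) * (p * E) := by rw [hv2, one_mul]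
      _ = v * ((1 - q) * (p * E)) := by rw [mul_assoc]
      _ = 0 := by rw [h4, mul_zero]
  have hsE : s * E = 0 := by rw [hs, mul_assoc, hpE, mul_zero]
  have hdE : d * E = 0 := by
    have e : d * E = a * b * E - a * c * E := by rw [hd, hE]; noncomm_ring
    rw [e, W1, W2, sub_self]
  have hxE : x * E = E := by
    obtain ⟨t, htdef⟩ : ∃ t : A, t = x * E - E := ⟨_, rfl⟩
    have hβt : β * t = 0 := by
      have e1 : β * (x * E) = E := by
        calc β * (x * E) = (β * x) * E := by rw [mul_assoc]
          _ = (1 - p) * E := by rw [hβxp]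
          _ = E - p * E := by noncomm_ring
          _ = E := by rw [hpE, sub_zero]
      calc β * t = β * (x * E) - β * E := by rw [htdef]; noncomm_ring
        _ = E - E := by rw [e1, hβE]
        _ = 0 := sub_self _
    have hpt : p * t = 0 := by
      calc p * t = p * (x * E) - p * E := by rw [htdef]; noncomm_ring
        _ = (p * x) * E - 0 := by rw [hpE, mul_assoc]
        _ = 0 := by rw [hpx, zero_mul, sub_zero]
    have ht0 : t = 0 := by
      calc t = (β * x + p) * t := by
            have e : β * x + p = 1 := by rw [hp]; noncomm_ring
            rw [e, one_mul]
        _ = (x * β) * t + p * t := by rw [hx2']; noncomm_ring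
        _ = x * (β * t) + 0 := by rw [hpt, mul_assoc]
        _ = 0 := by rw [hβt, mul_zero, add_zero]
    have := htdef ▸ ht0
    calc x * E = x * E - E + E := by noncomm_ring
      _ = 0 + E := by rw [this]
      _ = E := by rw [zero_add]
  -- left annihilation lemma
  have hLp : ∀ w : A, w * ((a * c) * p) = 0 → w * p = 0 := by
    intro w hw
    have hsplit : (a * c) * p + q = p := by
      rw [hβac, hq]; noncomm_ring
    have h1 : w * p = w * q := by
      calc w * p = w * ((a * c) * p + q) := by rw [hsplit]
        _ = w * ((a * c) * p) + w * q := by rw [mul_add]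
        _ = w * q := by rw [hw, zero_add]
    have hqpβ : q = p * β := by rw [hq, hpβ]
    have h2 : w * p = (w * p) * β := by
      calc w * p = w * q := h1
        _ = w * (p * β) := by rw [hqpβ]
        _ = (w * p) * β := by rw [← mul_assoc]
    have h3 : w * p = (w * p) * q := by
      calc w * p = ((w * p) * β) * p := by
            rw [← h2, mul_assoc, hpp]
        _ = (w * p) * (β * p) := by rw [mul_assoc]
        _ = (w * p) * q := by rw [hq]
    have h4 : (w * p) * (1 - q) = 0 := by
      rw [mul_sub, mul_one, ← h3, sub_self]
    calc w * p = (w * p) * ((1 - q) * v) := by rw [hv1, mul_one]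
      _ = ((w * p) * (1 - q)) * v := by noncomm_ring
      _ = 0 := by rw [h4, zero_mul]
  have hEcp : (E * c) * p = 0 := by
    apply hLp
    have e : (E * c) * ((a * c) * p) = (E * (c * a)) * (c * p) := by noncomm_ring
    rw [e, W3, zero_mul]
  have hdp : d * p = 0 := by
    apply hLp
    have e : d * ((a * c) * p) = ((d * a) * c) * p := by noncomm_ring
    rw [e, ← hE, hEcp]
  have hdq : d * q = 0 := by
    have hqpβ : q = p * β := by rw [hq, hpβ]
    rw [hqpβ, ← mul_assoc, hdp, zero_mul]
  have hds : d * s = 0 := by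
    rw [hspv, ← mul_assoc, hdp, zero_mul]
  have hdβa : d * (β * a) = E := by
    have e1 : β * a = a - a * c * a := by rw [hβ]; noncomm_ring
    rw [e1, mul_sub, ← hE, W4, sub_zero]
  -- the gamma identity (classical Jacobson for the pair (a, c))
  have hγid : (1 - c * a) * (1 + c * ((x - s) * a)) = 1 - c * (s * a) := by
    have e1 : (1 - c * a) * (1 + c * ((x - s) * a))
        = 1 - c * a + c * (((x - s) - (a * c) * (x - s)) * a) := by noncomm_ring
    have e2 : (x - s) - (a * c) * (x - s) = β * (x - s) := by
      rw [hβac]; noncomm_ring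
    have e3 : β * (x - s) = (1 - p) - v * q := by
      rw [mul_sub, hβxp, hβs]
    rw [e1, e2, e3]
    have e4 : s = p + v * q := hs_split
    calc 1 - c * a + c * ((1 - p - v * q) * a) = 1 - c * ((p + v * q) * a) := by noncomm_ring
      _ = 1 - c * (s * a) := by rw [← e4]
  have hone : (1 - c * a) * (1 + c * ((x - s) * a)) + c * (s * a) = 1 := by
    rw [hγid]; noncomm_ring
  -- G = E
  have hG : d * (x * a) = E := by
    obtain ⟨t, htdef⟩ : ∃ t : A, t = d * (x * a) - E := ⟨_, rfl⟩
    have htca : t * (c * a) = t := by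
      have e1 : (d * (x * a)) * (c * a) = d * (x * (a * c * a)) := by noncomm_ring
      have e2 : a * c * a = a - β * a := by rw [hβ]; noncomm_ring
      have e3 : x * (a - β * a) = x * a - (1 - p) * a := by
        have e4 : x * (β * a) = (1 - p) * a := by
          rw [← mul_assoc, ← hx2', hβxp]
        rw [mul_sub, e4]
      have e5 : (d * (x * a)) * (c * a) = d * (x * a) - E := by
        rw [e1, e2, e3]
        have e6 : d * (x * a - (1 - p) * a) = d * (x * a) - (d * a - (d * p) * a) := by
          noncomm_ring
        rw [e6, hdp, zero_mul, sub_zero, ← hE]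
      calc t * (c * a) = (d * (x * a)) * (c * a) - E * (c * a) := by rw [htdef]; noncomm_ring
        _ = (d * (x * a) - E) - 0 := by rw [e5, W3]
        _ = t := by rw [htdef, sub_zero]
    have ht1 : t * (1 - c * a) = 0 := by
      rw [mul_sub, mul_one, htca, sub_self]
    have ht2 : t * (c * (s * a)) = 0 := by
      have e1 : (d * (x * a)) * (c * (s * a)) = d * ((x * ((a * c) * s)) * a) := by noncomm_ring
      have e2 : E * (c * (s * a)) = ((E * c) * s) * a := by noncomm_ring
      have e3 : (E * c) * s = 0 := by
        rw [hspv, ← mul_assoc, hEcp, zero_mul]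
      have e4 : x * ((a * c) * s) = 0 := by rw [hacs, hxp]
      calc t * (c * (s * a)) = (d * (x * a)) * (c * (s * a)) - E * (c * (s * a)) := by
            rw [htdef]; noncomm_ring
        _ = d * ((x * ((a * c) * s)) * a) - ((E * c) * s) * a := by rw [e1, e2]
        _ = d * (0 * a) - 0 * a := by rw [e3, e4]
        _ = 0 := by simp
    have ht0 : t = 0 := by
      calc t = t * ((1 - c * a) * (1 + c * ((x - s) * a)) + c * (s * a)) := by
            rw [hone, mul_one]
        _ = (t * (1 - c * a)) * (1 + c * ((x - s) * a)) + t * (c * (s * a)) := by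
            noncomm_ring
        _ = 0 := by rw [ht1, ht2, zero_mul, zero_add]
    have := htdef ▸ ht0
    calc d * (x * a) = d * (x * a) - E + E := by noncomm_ring
      _ = 0 + E := by rw [this]
      _ = E := by rw [zero_add]
  -- main formula
  obtain ⟨K, hK⟩ : ∃ K : A, K = x + d - s := ⟨_, rfl⟩
  obtain ⟨y, hy⟩ : ∃ y : A, y = 1 + b * (K * a) := ⟨_, rfl⟩
  -- y * α = 1 - b (s a)
  have hKE : K * E = E := by
    have e : K * E = x * E + d * E - s * E := by rw [hK]; noncomm_ring
    rw [e, hxE, hdE, hsE]; noncomm_ring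
  have hxβa : x * (β * a) = a - p * a := by
    rw [← mul_assoc, ← hx2', hβxp, sub_mul, one_mul]
  have hKβa : K * (β * a) = a - p * a + E - v * (q * a) := by
    have e : K * (β * a) = x * (β * a) + d * (β * a) - s * (β * a) := by
      rw [hK]; noncomm_ring
    have e2 : s * (β * a) = v * (q * a) := by
      rw [← mul_assoc, hsβ, mul_assoc]
    rw [e, hxβa, hdβa, e2]
  have hsa_split : s * a = p * a + v * (q * a) := by
    rw [hs_split]; noncomm_ring
  have hyα : y * (1 - b * a) = 1 - b * (s * a) := by
    have e1 : y * (1 - b * a) = 1 - b * a + b * (K * (a - a * b * a)) := by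
      rw [hy]; noncomm_ring
    have e2 : a - a * b * a = β * a - E := by rw [hβ, hE, hd]; noncomm_ring
    have e3 : K * (β * a - E) = a - s * a := by
      have e4 : K * (β * a - E) = K * (β * a) - K * E := by noncomm_ring
      rw [e4, hKβa, hKE, hsa_split]; noncomm_ring
    rw [e1, e2, e3]; noncomm_ring
  -- α * y = 1 - b (s a)
  have hab : a * b = a * c + d := by rw [hd]; noncomm_ring
  have hαy : (1 - b * a) * y = 1 - b * (s * a) := by
    have e1 : (1 - b * a) * y = 1 - b * a + b * ((K - (a * b) * K) * a) := by
      rw [hy]; noncomm_ring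
    have e2 : K - (a * b) * K = β * K - d * K := by
      rw [hab, hβac]; noncomm_ring
    have e3 : (β * K) * a = a - p * a + E - v * (q * a) := by
      have e4 : β * K = β * x + β * d - β * s := by rw [hK]; noncomm_ring
      have e5 : (β * d) * a = E := by rw [mul_assoc, ← hE, hβE]
      have e6 : (β * s) * a = v * (q * a) := by rw [hβs, mul_assoc]
      calc (β * K) * a = (β * x) * a + (β * d) * a - (β * s) * a := by
            rw [e4]; noncomm_ring
        _ = (1 - p) * a + E - v * (q * a) := by rw [hβxp, e5, e6]
        _ = a - p * a + E - v * (q * a) := by noncomm_ring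
    have e7 : (d * K) * a = E := by
      have e8 : (d * K) * a = d * (x * a) + d * (d * a) - (d * s) * a := by
        rw [hK]; noncomm_ring
      rw [e8, hG, ← hE, hdE, hds]; noncomm_ring
    have e9 : ((K - (a * b) * K) * a) = a - s * a := by
      rw [e2]
      have : (β * K - d * K) * a = (β * K) * a - (d * K) * a := by noncomm_ring
      rw [this, e3, e7, hsa_split]; noncomm_ring
    rw [e1, e9]; noncomm_ring
  -- (b s a) * y = 0
  have hsab : s * (a * b) = p + s * d := by
    rw [hab, mul_add, hsac]
  have hPy : (b * (s * a)) * y = 0 := by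
    have e1 : (b * (s * a)) * y = b * (s * a) + b * (((s * (a * b)) * K) * a) := by
      rw [hy]; noncomm_ring
    have e2 : (s * (a * b)) * K = p * K + (s * d) * K := by
      rw [hsab]; noncomm_ring
    have e3 : p * K = p * d - s := by
      have e : p * K = p * x + p * d - p * s := by rw [hK]; noncomm_ring
      rw [e, hpx, hps]; noncomm_ring
    have e4 : (s * d) * K = s * (d * x) + s * (d * d) := by
      have e : (s * d) * K = s * (d * x) + s * (d * d) - s * (d * s) := by
        rw [hK]; noncomm_ring
      rw [e, hds, mul_zero]; noncomm_ring
    have e5 : ((s * (a * b)) * K) * a = - (s * a) := by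
      have ea : (p * d) * a = 0 := by
        rw [mul_assoc, ← hE, hpE]
      have eb : (s * (d * x)) * a = 0 := by
        have : (s * (d * x)) * a = s * (d * (x * a)) := by noncomm_ring
        rw [this, hG, hsE]
      have ec : (s * (d * d)) * a = 0 := by
        have : (s * (d * d)) * a = s * (d * (d * a)) := by noncomm_ring
        rw [this, ← hE, hdE, mul_zero]
      calc ((s * (a * b)) * K) * a
          = (p * d) * a - s * a + ((s * (d * x)) * a + (s * (d * d)) * a) := by
            rw [e2, e3, e4]; noncomm_ring
        _ = - (s * a) := by rw [ea, eb, ec]; noncomm_ring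
    rw [e1, e5]; noncomm_ring
  -- alpha * P = b (q s a)
  have habs : (a * b) * s = p := by
    rw [hab, add_mul, hacs, hds, add_zero]
  have hαP : (1 - b * a) * (b * (s * a)) = b * (q * s * a) := by
    have e1 : (1 - b * a) * (b * (s * a)) = b * ((s - (a * b) * s) * a) := by noncomm_ring
    have hqs : q * s = v * q := by
      calc q * s = q * (v * p) := by rw [hs]
        _ = (q * v) * p := by rw [← mul_assoc]
        _ = (v * q) * p := by rw [comm_v q rfl]
        _ = v * (q * p) := by rw [mul_assoc]
        _ = v * q := by rw [hqp]
    have e2 : s - (a * b) * s = q * s := by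
      rw [habs, hqs, hs_split]; noncomm_ring
    rw [e1, e2, mul_assoc]
  -- powers
  obtain ⟨Q, hQ⟩ : ∃ Q : A, Q = b * (q * s * a) := ⟨_, rfl⟩
  have hkey : (s * (a * b)) * (q * s) = q * s := by
    have e1 : (s * (a * b)) * (q * s) = p * (q * s) + ((s * d) * q) * s := by
      rw [hsab]; noncomm_ring
    have e2 : p * (q * s) = q * s := by rw [← mul_assoc, hpq]
    have e3 : (s * d) * q = 0 := by rw [mul_assoc, hdq, mul_zero]
    rw [e1, e2, e3, zero_mul, add_zero]
  have hpow : ∀ n : ℕ, Q ^ (n + 1) = b * (q ^ (n + 1) * s * a) := by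
    intro n
    induction n with
    | zero => rw [pow_one, pow_one, hQ]
    | succ m ih =>
      have e1 : Q ^ (m + 1 + 1) = Q ^ (m + 1) * Q := by rw [pow_succ]
      rw [e1, ih, hQ]
      have e2 : (b * (q ^ (m + 1) * s * a)) * (b * (q * s * a))
          = b * ((q ^ (m + 1) * ((s * (a * b)) * (q * s))) * a) := by noncomm_ring
      rw [e2, hkey]
      have e3 : q ^ (m + 1) * (q * s) = q ^ (m + 1 + 1) * s := by
        rw [pow_succ q (m + 1), ← mul_assoc]
      rw [e3]
  -- assemble
  refine ⟨y, ?_, ?_, ?_⟩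
  · -- y = y * (1 - b*a) * y
    calc y = y - b * (s * a) * y := by rw [hPy]; noncomm_ring
      _ = (1 - b * (s * a)) * y := by noncomm_ring
      _ = (y * (1 - b * a)) * y := by rw [hyα]
      _ = y * (1 - b * a) * y := by noncomm_ring
  · rw [hαy, hyα]
  · -- quasinilpotent part
    have e : (1 - b * a) - (1 - b * a) * (1 - b * a) * y = Q := by
      have e1 : (1 - b * a) - (1 - b * a) * (1 - b * a) * y
          = (1 - b * a) * (1 - (1 - b * a) * y) := by noncomm_ring
      have e2 : 1 - (1 - b * a) * y = b * (s * a) := by rw [hαy]; noncomm_ring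
      rw [e1, e2, hαP, hQ]
    rw [e]
    apply isQuasinilpotent_of_pow_le q Q hqQN (‖b‖ * ‖s * a‖)
    intro n hn
    obtain ⟨m, rfl⟩ : ∃ m, n = m + 1 := ⟨n - 1, by omega⟩
    rw [hpow m]
    calc ‖b * (q ^ (m + 1) * s * a)‖ ≤ ‖b‖ * ‖q ^ (m + 1) * s * a‖ := norm_mul_le _ _
      _ = ‖b‖ * ‖q ^ (m + 1) * (s * a)‖ := by rw [mul_assoc]
      _ ≤ ‖b‖ * (‖q ^ (m + 1)‖ * ‖s * a‖) := by
          have := norm_mul_le (q ^ (m + 1)) (s * a)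
          have hb : (0:ℝ) ≤ ‖b‖ := norm_nonneg _
          nlinarith
      _ = ‖b‖ * ‖s * a‖ * ‖q ^ (m + 1)‖ := by ring

end GJ

theorem generalized_jacobson_gDrazin {A : Type*} [NormedRing A] [NormedAlgebra ℂ A]
    [CompleteSpace A] (a b c : A)
    (h1 : a * b * a * b * a = a * b * a * c * a)
    (h2 : a * b * a * c * a = a * c * a * b * a)
    (h3 : a * c * a * b * a = a * c * a * c * a) :
    (∃ x : A, IsGDrazinInverse (1 - b * a) x) ↔
      (∃ x : A, IsGDrazinInverse (1 - a * c) x) := by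
  constructor
  · rintro ⟨x0, hx0⟩
    obtain ⟨x1, hx1⟩ := gd_transfer b a a x0 rfl rfl rfl hx0
    obtain ⟨x2, hx2⟩ := gd_transfer a c b x1 h3.symm h2.symm h1.symm hx1
    exact gd_transfer c a a x2 rfl rfl rfl hx2
  · rintro ⟨x0, hx0⟩
    exact gd_transfer a b c x0 h1 h2 h3 hx0
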